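/- Let H_1 and H_2 be n-qubit Hermitian matrices, and consider any interactive protocol that makes D queries to the controlled time evolution ctrl(e^{-iHt_d}) (for arbitrary times t_1,...,t_D and arbitrary interleaved unitaries on an extended system), followed by a POVM measurement. If p_1 and p_2 denote the output distributions when H = H_1 and H = H_2 respectively, then TV(p_1, p_2) ≤ min(2·||H_1 − H_2||·Σ_d |t_d|, 1). -/

import Mathlib

open scoped BigOperators Matrix ComplexOrder

/-- The controlled time evolution `ctrl(e^{-iHt}) ⊗ I` on a system consisting of one
control qubit, `n` system qubits, and an arbitrary finite ancilla `A`. -/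
noncomputable def ctrlEvolExt (n : ℕ) (H : Matrix (Fin n → Fin 2) (Fin n → Fin 2) ℂ)
    (t : ℝ) (A : Type*) [Fintype A] [DecidableEq A] :
    Matrix (Fin 2 × (Fin n → Fin 2) × A) (Fin 2 × (Fin n → Fin 2) × A) ℂ :=
  Matrix.of fun p q =>
    if p.1 = q.1 ∧ p.2.2 = q.2.2 then
      (if p.1 = 0 then (if p.2.1 = q.2.1 then 1 else 0)
       else NormedSpace.exp ((-(Complex.I * (t : ℂ))) • H) p.2.1 q.2.1)
    else 0

/-- The overall unitary `U_{D+1}(ctrl(e^{-iHt_D})⊗I)U_D ⋯ U_2(ctrl(e^{-iHt_1})⊗I)U_1`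
of a single-round experiment. -/
noncomputable def runCircuit (n : ℕ) (H : Matrix (Fin n → Fin 2) (Fin n → Fin 2) ℂ)
    {A : Type*} [Fintype A] [DecidableEq A] (D : ℕ) (t : Fin D → ℝ)
    (U : Fin (D + 1) → Matrix (Fin 2 × (Fin n → Fin 2) × A)
      (Fin 2 × (Fin n → Fin 2) × A) ℂ) :
    Matrix (Fin 2 × (Fin n → Fin 2) × A) (Fin 2 × (Fin n → Fin 2) × A) ℂ :=
  U (Fin.last D) *
    ((List.ofFn fun i : Fin D => ctrlEvolExt n H (t i) A * U i.castSucc).reverse).prod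


set_option linter.unusedSectionVars false
set_option maxHeartbeats 2000000



section Blk
variable {S A' : Type*} [Fintype S] [DecidableEq S] [Fintype A'] [DecidableEq A']

/-- reindexing equivalence -/
def blkE (S A' : Type*) : (Fin 2 × S × A') ≃ (S × (Fin 2 × A')) where
  toFun p := (p.2.1, (p.1, p.2.2))
  invFun q := (q.2.1, q.1, q.2.2)
  left_inv := fun ⟨c, s, a⟩ => rfl
  right_inv := fun ⟨s, c, a⟩ => rfl

/-- block matrix controlled by the first qubit -/
noncomputable def blkF (F : Fin 2 → Matrix S S ℂ) :
    Matrix (Fin 2 × S × A') (Fin 2 × S × A') ℂ :=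
  (Matrix.blockDiagonal fun ca : Fin 2 × A' => F ca.1).submatrix (blkE S A') (blkE S A')

lemma blkF_apply (F : Fin 2 → Matrix S S ℂ) (p q : Fin 2 × S × A') :
    blkF F p q = if p.1 = q.1 ∧ p.2.2 = q.2.2 then F p.1 p.2.1 q.2.1 else 0 := by
  obtain ⟨c, s, a⟩ := p; obtain ⟨c', s', a'⟩ := q
  simp [blkF, blkE, Matrix.blockDiagonal_apply, Prod.mk.injEq]

lemma blkF_sub (F G : Fin 2 → Matrix S S ℂ) :
    blkF (A' := A') F - blkF G = blkF (fun c => F c - G c) := by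
  ext p q
  simp only [Matrix.sub_apply, blkF_apply]
  split_ifs <;> simp

lemma blkF_conjTranspose (F : Fin 2 → Matrix S S ℂ) :
    (blkF (A' := A') F)ᴴ = blkF (fun c => (F c)ᴴ) := by
  simp only [blkF, Matrix.conjTranspose_submatrix, Matrix.blockDiagonal_conjTranspose]

lemma blkF_mul (F G : Fin 2 → Matrix S S ℂ) :
    blkF (A' := A') F * blkF G = blkF (fun c => F c * G c) := by
  simp only [blkF, Matrix.submatrix_mul_equiv, Matrix.blockDiagonal_mul]

lemma blkF_one : blkF (A' := A') (fun _ => (1 : Matrix S S ℂ)) = 1 := by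
  rw [blkF, show (fun ca : Fin 2 × A' => (1 : Matrix S S ℂ)) = 1 from rfl,
    Matrix.blockDiagonal_one, Matrix.submatrix_one_equiv]

lemma blockDiagonal_mulVec {g : Fin 2 × A' → Matrix S S ℂ} (w : S × (Fin 2 × A') → ℂ)
    (s : S) (k : Fin 2 × A') :
    (Matrix.blockDiagonal g *ᵥ w) (s, k) = (g k *ᵥ fun s' => w (s', k)) s := by
  simp [Matrix.mulVec, dotProduct, Matrix.blockDiagonal_apply, Fintype.sum_prod_type,
    ite_mul, zero_mul, Finset.sum_ite_eq, Finset.sum_ite_eq']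

lemma blkF_mulVec (F : Fin 2 → Matrix S S ℂ) (v : Fin 2 × S × A' → ℂ) (p : Fin 2 × S × A') :
    (blkF F *ᵥ v) p = ((F p.1) *ᵥ fun s => v (p.1, s, p.2.2)) p.2.1 := by
  obtain ⟨c, s, a⟩ := p
  rw [blkF, Matrix.submatrix_mulVec_equiv]
  show (Matrix.blockDiagonal _ *ᵥ (v ∘ (blkE S A').symm)) (s, (c, a)) = _
  rw [blockDiagonal_mulVec]
  rfl

lemma blkF_mem_unitary (F : Fin 2 → Matrix S S ℂ)
    (hF : ∀ c, F c ∈ Matrix.unitaryGroup S ℂ) :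
    blkF (A' := A') F ∈ Matrix.unitaryGroup (Fin 2 × S × A') ℂ := by
  rw [Matrix.mem_unitaryGroup_iff']
  rw [Matrix.star_eq_conjTranspose, blkF_conjTranspose, blkF_mul]
  rw [show (fun c => (F c)ᴴ * F c) = fun _ => (1 : Matrix S S ℂ) from funext fun c => by
    rw [← Matrix.star_eq_conjTranspose]; exact (hF c).1]
  exact blkF_one

end Blk

section Tele
variable {R : Type*} [NormedRing R] [NormOneClass R]

lemma norm_list_prod_le_one : ∀ (l : List R), (∀ x ∈ l, ‖x‖ ≤ 1) → ‖l.prod‖ ≤ 1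
  | [], _ => by simp
  | a :: l, h => by
    rw [List.prod_cons]
    calc ‖a * l.prod‖ ≤ ‖a‖ * ‖l.prod‖ := norm_mul_le _ _
    _ ≤ 1 * 1 := by
        apply mul_le_mul (h a (by simp)) (norm_list_prod_le_one l fun x hx => h x (by simp [hx]))
          (norm_nonneg _) zero_le_one
    _ = 1 := mul_one 1

lemma tele_bound : ∀ (m : ℕ) (f g : Fin m → R), (∀ i, ‖f i‖ ≤ 1) → (∀ i, ‖g i‖ ≤ 1) →
    ‖(List.ofFn f).reverse.prod - (List.ofFn g).reverse.prod‖ ≤ ∑ i, ‖f i - g i‖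
  | 0, f, g, _, _ => by simp
  | (m + 1), f, g, hf, hg => by
    have hof : ∀ (h : Fin (m+1) → R), (List.ofFn h).reverse.prod
        = (List.ofFn (fun i : Fin m => h i.succ)).reverse.prod * h 0 := by
      intro h
      rw [List.ofFn_succ, List.reverse_cons, List.prod_append, List.prod_cons, List.prod_nil,
        mul_one]
    rw [hof f, hof g]
    have key : (List.ofFn (fun i : Fin m => f i.succ)).reverse.prod * f 0 -
        (List.ofFn (fun i : Fin m => g i.succ)).reverse.prod * g 0 =
        ((List.ofFn (fun i : Fin m => f i.succ)).reverse.prod -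
          (List.ofFn (fun i : Fin m => g i.succ)).reverse.prod) * g 0 +
        (List.ofFn (fun i : Fin m => f i.succ)).reverse.prod * (f 0 - g 0) := by
      noncomm_ring
    rw [key, Fin.sum_univ_succ]
    have h1 : ‖((List.ofFn (fun i : Fin m => f i.succ)).reverse.prod -
          (List.ofFn (fun i : Fin m => g i.succ)).reverse.prod) * g 0‖ ≤
        ∑ i : Fin m, ‖f i.succ - g i.succ‖ := by
      calc _ ≤ ‖_ - _‖ * ‖g 0‖ := norm_mul_le _ _
      _ ≤ (∑ i : Fin m, ‖f i.succ - g i.succ‖) * 1 := by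
          apply mul_le_mul (tele_bound m _ _ (fun i => hf i.succ) (fun i => hg i.succ)) (hg 0)
            (norm_nonneg _) (Finset.sum_nonneg fun _ _ => norm_nonneg _)
      _ = _ := mul_one _
    have h2 : ‖(List.ofFn (fun i : Fin m => f i.succ)).reverse.prod * (f 0 - g 0)‖ ≤
        ‖f 0 - g 0‖ := by
      calc _ ≤ ‖(List.ofFn (fun i : Fin m => f i.succ)).reverse.prod‖ * ‖f 0 - g 0‖ :=
            norm_mul_le _ _
      _ ≤ 1 * ‖f 0 - g 0‖ := by
          apply mul_le_mul_of_nonneg_right _ (norm_nonneg _)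
          apply norm_list_prod_le_one
          intro x hx
          rw [List.mem_reverse, List.mem_ofFn] at hx
          obtain ⟨i, rfl⟩ := hx
          exact hf i.succ
      _ = _ := one_mul _
    calc ‖_ + _‖ ≤ _ := norm_add_le _ _
    _ ≤ (∑ i : Fin m, ‖f i.succ - g i.succ‖) + ‖f 0 - g 0‖ := add_le_add h1 h2
    _ = ‖f 0 - g 0‖ + ∑ i : Fin m, ‖f i.succ - g i.succ‖ := by ring

end Tele

section Vec
open scoped Matrix.Norms.L2Operator
variable {κ : Type*} [Fintype κ] [DecidableEq κ]

noncomputable def ev (v : κ → ℂ) : EuclideanSpace ℂ κ := (WithLp.equiv 2 (κ → ℂ)).symm v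

lemma ev_norm_sq (v : κ → ℂ) : ‖ev v‖ ^ 2 = ∑ i, ‖v i‖ ^ 2 := by
  rw [EuclideanSpace.norm_eq, Real.sq_sqrt (Finset.sum_nonneg fun _ _ => by positivity)]
  simp [ev]

lemma ev_mulVec_le (B : Matrix κ κ ℂ) (v : κ → ℂ) : ‖ev (B *ᵥ v)‖ ≤ ‖B‖ * ‖ev v‖ :=
  B.l2_opNorm_mulVec (ev v)

lemma dot_eq_inner (u v : κ → ℂ) :
    dotProduct (star u) v = @inner ℂ _ _ (ev u) (ev v) := by
  simp [dotProduct, PiLp.inner_apply, ev, RCLike.inner_apply, mul_comm]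

lemma abs_dot_le (u v : κ → ℂ) : ‖dotProduct (star u) v‖ ≤ ‖ev u‖ * ‖ev v‖ := by
  rw [dot_eq_inner]; exact norm_inner_le_norm _ _

lemma re_dot_self (u : κ → ℂ) : (dotProduct (star u) u).re = ‖ev u‖ ^ 2 := by
  rw [dot_eq_inner]
  exact inner_self_eq_norm_sq (𝕜 := ℂ) (ev u)

lemma dot_factor (B : Matrix κ κ ℂ) (u v : κ → ℂ) :
    dotProduct (star u) ((Bᴴ * B) *ᵥ v) =
      dotProduct (star (B *ᵥ u)) (B *ᵥ v) := by
  rw [← Matrix.mulVec_mulVec, Matrix.dotProduct_mulVec, Matrix.star_mulVec,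
    Matrix.dotProduct_mulVec]

end Vec

section BlkNorm
open scoped Matrix.Norms.L2Operator
variable {S A' : Type*} [Fintype S] [DecidableEq S] [Fintype A'] [DecidableEq A']

lemma matrix_norm_le_of {κ : Type*} [Fintype κ] [DecidableEq κ] (B : Matrix κ κ ℂ) {C : ℝ}
    (hC : 0 ≤ C) (h : ∀ v : κ → ℂ, ‖ev (B *ᵥ v)‖ ≤ C * ‖ev v‖) : ‖B‖ ≤ C := by
  rw [Matrix.l2_opNorm_def]
  refine ContinuousLinearMap.opNorm_le_bound _ hC fun x => ?_
  exact h (WithLp.equiv 2 (κ → ℂ) x)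

lemma blkF_norm_le (F : Fin 2 → Matrix S S ℂ) {C : ℝ} (hC : 0 ≤ C) (h : ∀ c, ‖F c‖ ≤ C) :
    ‖blkF (A' := A') F‖ ≤ C := by
  refine matrix_norm_le_of _ hC fun v => ?_
  have key : ‖ev (blkF (A' := A') F *ᵥ v)‖ ^ 2 ≤ (C * ‖ev v‖) ^ 2 := by
    calc ‖ev (blkF (A' := A') F *ᵥ v)‖ ^ 2
        = ∑ c, ∑ a, ∑ s, ‖(F c *ᵥ fun s' => v (c, s', a)) s‖ ^ 2 := by
          rw [ev_norm_sq, Fintype.sum_prod_type]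
          refine Finset.sum_congr rfl fun c _ => ?_
          rw [Fintype.sum_prod_type, Finset.sum_comm]
          exact Finset.sum_congr rfl fun a _ => Finset.sum_congr rfl fun s _ => by
            rw [blkF_mulVec]
    _ ≤ ∑ c, ∑ a, C ^ 2 * ∑ s, ‖v (c, s, a)‖ ^ 2 := by
          refine Finset.sum_le_sum fun c _ => Finset.sum_le_sum fun a _ => ?_
          rw [show (∑ s, ‖(F c *ᵥ fun s' => v (c, s', a)) s‖ ^ 2)
              = ‖ev (F c *ᵥ fun s' => v (c, s', a))‖ ^ 2 from (ev_norm_sq _).symm]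
          calc ‖ev (F c *ᵥ fun s' => v (c, s', a))‖ ^ 2
              ≤ (C * ‖ev fun s' => v (c, s', a)‖) ^ 2 := by
                apply pow_le_pow_left₀ (norm_nonneg _)
                exact (ev_mulVec_le _ _).trans
                  (mul_le_mul_of_nonneg_right (h c) (norm_nonneg _))
          _ = C ^ 2 * ∑ s, ‖v (c, s, a)‖ ^ 2 := by rw [mul_pow, ev_norm_sq]
    _ = (C * ‖ev v‖) ^ 2 := by
          simp only [← Finset.mul_sum]
          rw [mul_pow, ev_norm_sq, Fintype.sum_prod_type]
          congr 1
          refine Finset.sum_congr rfl fun c _ => ?_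
          rw [Fintype.sum_prod_type, Finset.sum_comm]
  have h1 := Real.sqrt_le_sqrt key
  rwa [Real.sqrt_sq (norm_nonneg _), Real.sqrt_sq (by positivity)] at h1

end BlkNorm

section ExpFacts
variable {κ : Type*} [Fintype κ] [DecidableEq κ]

lemma skew_star {T : Matrix κ κ ℂ} (hT : T.IsHermitian) (t : ℝ) :
    star ((-(Complex.I * (t : ℂ))) • T) = -((-(Complex.I * (t : ℂ))) • T) := by
  rw [star_smul, Matrix.star_eq_conjTranspose, hT.eq, ← neg_smul, neg_neg]
  congr 1
  simp [Complex.ext_iff]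

lemma exp_skew_mem_unitary {T : Matrix κ κ ℂ} (hT : T.IsHermitian) (t : ℝ) :
    NormedSpace.exp ((-(Complex.I * (t : ℂ))) • T) ∈ Matrix.unitaryGroup κ ℂ := by
  set B := (-(Complex.I * (t : ℂ))) • T with hB
  have hstar : star B = -B := skew_star hT t
  constructor
  · rw [Matrix.star_eq_conjTranspose, ← Matrix.exp_conjTranspose,
      ← Matrix.star_eq_conjTranspose, hstar, ← Matrix.exp_add_of_commute (-B) B (Commute.refl B).neg_left,
      neg_add_cancel, NormedSpace.exp_zero]
  · rw [Matrix.star_eq_conjTranspose, ← Matrix.exp_conjTranspose,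
      ← Matrix.star_eq_conjTranspose, hstar, ← Matrix.exp_add_of_commute B (-B) (Commute.refl B).neg_right,
      add_neg_cancel, NormedSpace.exp_zero]

end ExpFacts

section ExpDiff
open scoped Matrix.Norms.L2Operator
open NormedSpace
variable {κ : Type*} [Fintype κ] [DecidableEq κ] [Nonempty κ]

lemma norm_exp_skew_smul {T : Matrix κ κ ℂ} (hT : T.IsHermitian) (t : ℝ) (s : ℝ) :
    ‖exp (s • ((-(Complex.I * (t : ℂ))) • T))‖ = 1 := by
  apply CStarRing.norm_of_mem_unitary (E := Matrix κ κ ℂ)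
  have e : s • ((-(Complex.I * (t : ℂ))) • T) = (-(Complex.I * ((s * t : ℝ) : ℂ))) • T := by
    rw [← smul_assoc]; congr 1; simp [Complex.real_smul]; ring
  rw [e]; exact exp_skew_mem_unitary hT (s * t)

lemma exp_skew_diff_norm {T₁ T₂ : Matrix κ κ ℂ} (h₁ : T₁.IsHermitian) (h₂ : T₂.IsHermitian)
    (t : ℝ) :
    ‖exp ((-(Complex.I * (t : ℂ))) • T₁) - exp ((-(Complex.I * (t : ℂ))) • T₂)‖ ≤
      ‖T₁ - T₂‖ * |t| := by
  set B₁ := (-(Complex.I * (t : ℂ))) • T₁ with hB₁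
  set B₂ := (-(Complex.I * (t : ℂ))) • T₂ with hB₂
  set f : ℝ → Matrix κ κ ℂ := fun s => exp (s • B₁) * exp ((1 - s) • B₂) with hf
  set f' : ℝ → Matrix κ κ ℂ := fun s => exp (s • B₁) * ((B₁ - B₂) * exp ((1 - s) • B₂))
    with hf'
  have hderiv : ∀ s : ℝ, HasDerivAt f (f' s) s := by
    intro s
    have d1 : HasDerivAt (fun u : ℝ => exp (u • B₁)) (exp (s • B₁) * B₁) s := by
      have := hasDerivAt_exp_smul_const (𝕂 := ℝ) B₁ s
      exact this
    have hlin : HasDerivAt (fun u : ℝ => 1 - u) (-1) s := (hasDerivAt_id s).const_sub 1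
    have d2' : HasDerivAt (fun u : ℝ => exp (u • B₂)) (exp ((1 - s) • B₂) * B₂) (1 - s) := by
      have := hasDerivAt_exp_smul_const (𝕂 := ℝ) B₂ (1 - s)
      exact this
    have d2 : HasDerivAt (fun u : ℝ => exp ((1 - u) • B₂))
        (-(exp ((1 - s) • B₂) * B₂)) s := by
      have := d2'.scomp s hlin
      exact this.congr_deriv (by simp)
    have := d1.mul d2
    refine HasDerivAt.congr_deriv this ?_
    have hcomm : exp ((1 - s) • B₂) * B₂ = B₂ * exp ((1 - s) • B₂) := by
      exact (((Commute.refl B₂).smul_left (1 - s)).exp_left).eq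
    rw [hf', hcomm]
    noncomm_ring
  have hbound : ∀ s ∈ Set.univ, ‖f' s‖ ≤ ‖T₁ - T₂‖ * |t| := by
    intro s _
    calc ‖f' s‖ ≤ ‖exp (s • B₁)‖ * ‖(B₁ - B₂) * exp ((1 - s) • B₂)‖ := norm_mul_le _ _
    _ ≤ ‖exp (s • B₁)‖ * (‖B₁ - B₂‖ * ‖exp ((1 - s) • B₂)‖) := by
        gcongr; exact norm_mul_le _ _
    _ = ‖B₁ - B₂‖ := by rw [norm_exp_skew_smul h₁, norm_exp_skew_smul h₂, one_mul, mul_one]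
    _ ≤ ‖T₁ - T₂‖ * |t| := by
        rw [hB₁, hB₂, ← smul_sub, norm_smul]
        simp [mul_comm]
  have key := Convex.norm_image_sub_le_of_norm_hasDerivWithin_le
    (fun s _ => (hderiv s).hasDerivWithinAt) hbound convex_univ (Set.mem_univ (0 : ℝ))
    (Set.mem_univ (1 : ℝ))
  have hf1 : f 1 = exp B₁ := by
    rw [hf]; simp [exp_zero]
  have hf0 : f 0 = exp B₂ := by
    rw [hf]; simp [exp_zero]
  rw [hf1, hf0] at key
  simpa using key

end ExpDiff
section CtrlLemmas

variable {nq : ℕ}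

lemma ctrlEvolExt_eq_blkF (n : ℕ) (H : Matrix (Fin n → Fin 2) (Fin n → Fin 2) ℂ) (τ : ℝ)
    (A : Type*) [Fintype A] [DecidableEq A] :
    ctrlEvolExt n H τ A = blkF (A' := A)
      (fun c => if c = 0 then 1 else NormedSpace.exp ((-(Complex.I * (τ : ℂ))) • H)) := by
  ext p q
  rw [blkF_apply]
  simp only [ctrlEvolExt, Matrix.of_apply]
  by_cases h : p.1 = q.1 ∧ p.2.2 = q.2.2
  · rw [if_pos h, if_pos h]
    by_cases h0 : p.1 = 0 <;> simp [h0, Matrix.one_apply]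
  · rw [if_neg h, if_neg h]

lemma ctrlEvolExt_mem_unitary {n : ℕ} {H : Matrix (Fin n → Fin 2) (Fin n → Fin 2) ℂ}
    (hH : H.IsHermitian) (τ : ℝ) (A : Type*) [Fintype A] [DecidableEq A] :
    ctrlEvolExt n H τ A ∈ Matrix.unitaryGroup (Fin 2 × (Fin n → Fin 2) × A) ℂ := by
  rw [ctrlEvolExt_eq_blkF]
  apply blkF_mem_unitary
  intro c
  by_cases h0 : c = 0
  · rw [if_pos h0]; exact one_mem _
  · rw [if_neg h0]; exact exp_skew_mem_unitary hH τ

end CtrlLemmas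

section MainProof
open scoped Matrix.Norms.L2Operator

lemma ctrl_diff_norm {n : ℕ} {H₁ H₂ : Matrix (Fin n → Fin 2) (Fin n → Fin 2) ℂ}
    (hH₁ : H₁.IsHermitian) (hH₂ : H₂.IsHermitian) (τ : ℝ)
    (A : Type*) [Fintype A] [DecidableEq A] :
    ‖ctrlEvolExt n H₁ τ A - ctrlEvolExt n H₂ τ A‖ ≤ ‖H₁ - H₂‖ * |τ| := by
  rw [ctrlEvolExt_eq_blkF, ctrlEvolExt_eq_blkF, blkF_sub]
  apply blkF_norm_le _ (by positivity)
  intro c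
  by_cases h0 : c = 0
  · simp only [h0, if_pos]
    simp only [if_true, sub_self, norm_zero]
    positivity
  · simp only [if_neg h0]
    exact exp_skew_diff_norm hH₁ hH₂ τ


/-- For any single-round experiment interleaving `D` queries to the controlled time
evolution of `H` with arbitrary unitaries on an extended system, followed by a POVM
measurement, the total variation distance between the output distributions under `H₁`
and `H₂` is at most `min(2‖H₁ − H₂‖ ∑_d |t_d|, 1)`. -/
theorem stmt18 (n : ℕ) (H₁ H₂ : Matrix (Fin n → Fin 2) (Fin n → Fin 2) ℂ)
    (hH₁ : H₁.IsHermitian) (hH₂ : H₂.IsHermitian)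
    {A : Type*} [Fintype A] [DecidableEq A]
    (D : ℕ) (t : Fin D → ℝ)
    (U : Fin (D + 1) → Matrix (Fin 2 × (Fin n → Fin 2) × A)
      (Fin 2 × (Fin n → Fin 2) × A) ℂ)
    (hU : ∀ i, U i ∈ Matrix.unitaryGroup (Fin 2 × (Fin n → Fin 2) × A) ℂ)
    (ψ₀ : Fin 2 × (Fin n → Fin 2) × A → ℂ)
    (hψ₀ : ∑ x, Complex.normSq (ψ₀ x) = 1)
    {O : Type*} [Fintype O]
    (M : O → Matrix (Fin 2 × (Fin n → Fin 2) × A) (Fin 2 × (Fin n → Fin 2) × A) ℂ)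
    (hMpos : ∀ o, (M o).PosSemidef) (hMsum : ∑ o, M o = 1)
    (p₁ p₂ : O → ℝ)
    (hp₁ : ∀ o, p₁ o =
      (dotProduct (star ((runCircuit n H₁ D t U).mulVec ψ₀))
        ((M o).mulVec ((runCircuit n H₁ D t U).mulVec ψ₀))).re)
    (hp₂ : ∀ o, p₂ o =
      (dotProduct (star ((runCircuit n H₂ D t U).mulVec ψ₀))
        ((M o).mulVec ((runCircuit n H₂ D t U).mulVec ψ₀))).re) :
    (1 / 2) * ∑ o, |p₁ o - p₂ o| ≤
      min (2 * ‖Matrix.toEuclideanCLM (𝕜 := ℂ) (H₁ - H₂)‖ * ∑ i, |t i|) 1 := by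
  classical
  -- the ancilla is nonempty, else `hψ₀` is contradictory
  rcases isEmpty_or_nonempty A with hA | hA
  · exfalso
    rw [Finset.univ_eq_empty, Finset.sum_empty] at hψ₀
    norm_num at hψ₀
  set V₁ := runCircuit n H₁ D t U with hV₁
  set V₂ := runCircuit n H₂ D t U with hV₂
  set ψ₁ := V₁ *ᵥ ψ₀ with hψ₁def
  set ψ₂ := V₂ *ᵥ ψ₀ with hψ₂def
  -- unitarity of the circuits
  have hVmem : ∀ (H : Matrix (Fin n → Fin 2) (Fin n → Fin 2) ℂ), H.IsHermitian →
      runCircuit n H D t U ∈ Matrix.unitaryGroup (Fin 2 × (Fin n → Fin 2) × A) ℂ := by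
    intro H hH
    rw [runCircuit]
    refine mul_mem (hU _) (list_prod_mem fun x hx => ?_)
    rw [List.mem_reverse, List.mem_ofFn] at hx
    obtain ⟨i, rfl⟩ := hx
    exact mul_mem (ctrlEvolExt_mem_unitary hH _ A) (hU _)
  have hV₁mem := hVmem H₁ hH₁
  have hV₂mem := hVmem H₂ hH₂
  -- dot products are preserved by unitaries
  have hpres : ∀ V : Matrix (Fin 2 × (Fin n → Fin 2) × A) (Fin 2 × (Fin n → Fin 2) × A) ℂ, V ∈ Matrix.unitaryGroup (Fin 2 × (Fin n → Fin 2) × A) ℂ →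
      dotProduct (star (V *ᵥ ψ₀)) (V *ᵥ ψ₀) = dotProduct (star ψ₀) ψ₀ := by
    intro V hV
    rw [Matrix.star_mulVec, Matrix.dotProduct_mulVec, Matrix.vecMul_vecMul]
    have h1 : Vᴴ * V = 1 := by rw [← Matrix.star_eq_conjTranspose]; exact hV.1
    rw [h1, Matrix.vecMul_one]
  have hevψ₀ : ‖ev ψ₀‖ ^ 2 = 1 := by
    rw [ev_norm_sq]
    rw [← hψ₀]
    exact Finset.sum_congr rfl fun x _ => by
      rw [Complex.sq_norm]
  have hψ₀norm : ‖ev ψ₀‖ = 1 := by nlinarith [norm_nonneg (ev ψ₀), hevψ₀]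
  have hevψ₁ : ‖ev ψ₁‖ ^ 2 = 1 := by
    rw [← re_dot_self, hψ₁def, hpres V₁ hV₁mem, re_dot_self, hevψ₀]
  have hevψ₂ : ‖ev ψ₂‖ ^ 2 = 1 := by
    rw [← re_dot_self, hψ₂def, hpres V₂ hV₂mem, re_dot_self, hevψ₀]
  -- factor each POVM element
  choose B hB using fun o => (show ∃ B, M o = Bᴴ * B by
    open scoped MatrixOrder in exact ⟨CFC.sqrt (M o), by
      rw [(Matrix.nonneg_iff_posSemidef.mp (CFC.sqrt_nonneg (M o))).isHermitian.eq,
        CFC.sqrt_mul_sqrt_self _ (hMpos o).nonneg]⟩)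
  -- sums of the quadratic forms
  have hmsum : ∀ u : (Fin 2 × (Fin n → Fin 2) × A) → ℂ, ∑ o, dotProduct (star u) (M o *ᵥ u) =
      dotProduct (star u) u := by
    intro u
    let φ : Matrix (Fin 2 × (Fin n → Fin 2) × A) (Fin 2 × (Fin n → Fin 2) × A) ℂ →+ ℂ :=
      { toFun := fun X => dotProduct (star u) (X *ᵥ u)
        map_zero' := by simp
        map_add' := fun X Y => by
          show dotProduct (star u) ((X + Y) *ᵥ u) = _
          rw [Matrix.add_mulVec, dotProduct_add] }
    have := (map_sum φ M Finset.univ).symm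
    simp only [φ, AddMonoidHom.coe_mk, ZeroHom.coe_mk] at this
    rw [this, hMsum, Matrix.one_mulVec]
  have key2 : ∀ u : (Fin 2 × (Fin n → Fin 2) × A) → ℂ, ∑ o, ‖ev (B o *ᵥ u)‖ ^ 2 = ‖ev u‖ ^ 2 := by
    intro u
    have e1 : ∀ o, ‖ev (B o *ᵥ u)‖ ^ 2 = (dotProduct (star u) (M o *ᵥ u)).re := by
      intro o
      rw [hB o, dot_factor, re_dot_self]
    calc ∑ o, ‖ev (B o *ᵥ u)‖ ^ 2 = ∑ o, (dotProduct (star u) (M o *ᵥ u)).re :=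
          Finset.sum_congr rfl fun o _ => e1 o
    _ = (∑ o, dotProduct (star u) (M o *ᵥ u)).re := (Complex.re_sum _ _).symm
    _ = ‖ev u‖ ^ 2 := by rw [hmsum, re_dot_self]
  -- probabilities as squares
  have hbp₁ : ∀ o, p₁ o = ‖ev (B o *ᵥ ψ₁)‖ ^ 2 := by
    intro o
    rw [hp₁ o, hB o, dot_factor, re_dot_self]
  have hbp₂ : ∀ o, p₂ o = ‖ev (B o *ᵥ ψ₂)‖ ^ 2 := by
    intro o
    rw [hp₂ o, hB o, dot_factor, re_dot_self]
  -- pointwise bound via Cauchy-Schwarz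
  have hdiff : ∀ o, |p₁ o - p₂ o| ≤
      ‖ev (B o *ᵥ (ψ₁ - ψ₂))‖ * ‖ev (B o *ᵥ ψ₁)‖ +
      ‖ev (B o *ᵥ ψ₂)‖ * ‖ev (B o *ᵥ (ψ₁ - ψ₂))‖ := by
    intro o
    have hsplit : dotProduct (star ψ₁) (M o *ᵥ ψ₁) -
        dotProduct (star ψ₂) (M o *ᵥ ψ₂) =
        dotProduct (star (ψ₁ - ψ₂)) (M o *ᵥ ψ₁) +
        dotProduct (star ψ₂) (M o *ᵥ (ψ₁ - ψ₂)) := by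
      rw [star_sub, sub_dotProduct, Matrix.mulVec_sub, dotProduct_sub]
      ring
    have hval : p₁ o - p₂ o = (dotProduct (star (ψ₁ - ψ₂)) (M o *ᵥ ψ₁) +
        dotProduct (star ψ₂) (M o *ᵥ (ψ₁ - ψ₂))).re := by
      rw [hp₁ o, hp₂ o, ← hsplit]
      rfl
    rw [hval]
    calc |(dotProduct (star (ψ₁ - ψ₂)) (M o *ᵥ ψ₁) +
        dotProduct (star ψ₂) (M o *ᵥ (ψ₁ - ψ₂))).re|
        ≤ ‖dotProduct (star (ψ₁ - ψ₂)) (M o *ᵥ ψ₁) +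
          dotProduct (star ψ₂) (M o *ᵥ (ψ₁ - ψ₂))‖ := Complex.abs_re_le_norm _
    _ ≤ ‖dotProduct (star (ψ₁ - ψ₂)) (M o *ᵥ ψ₁)‖ +
        ‖dotProduct (star ψ₂) (M o *ᵥ (ψ₁ - ψ₂))‖ := norm_add_le _ _
    _ ≤ ‖ev (B o *ᵥ (ψ₁ - ψ₂))‖ * ‖ev (B o *ᵥ ψ₁)‖ +
        ‖ev (B o *ᵥ ψ₂)‖ * ‖ev (B o *ᵥ (ψ₁ - ψ₂))‖ := by
        apply add_le_add
        · rw [hB o, dot_factor]; exact abs_dot_le _ _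
        · rw [hB o, dot_factor]; exact abs_dot_le _ _
  -- total variation bound via Cauchy-Schwarz over outcomes
  have hCS1 : ∑ o, ‖ev (B o *ᵥ (ψ₁ - ψ₂))‖ * ‖ev (B o *ᵥ ψ₁)‖ ≤ ‖ev (ψ₁ - ψ₂)‖ := by
    calc ∑ o, ‖ev (B o *ᵥ (ψ₁ - ψ₂))‖ * ‖ev (B o *ᵥ ψ₁)‖
        ≤ Real.sqrt (∑ o, ‖ev (B o *ᵥ (ψ₁ - ψ₂))‖ ^ 2) *
          Real.sqrt (∑ o, ‖ev (B o *ᵥ ψ₁)‖ ^ 2) :=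
          Real.sum_mul_le_sqrt_mul_sqrt _ _ _
    _ = ‖ev (ψ₁ - ψ₂)‖ := by
        rw [key2, key2, hevψ₁, Real.sqrt_one, mul_one, Real.sqrt_sq (norm_nonneg _)]
  have hCS2 : ∑ o, ‖ev (B o *ᵥ ψ₂)‖ * ‖ev (B o *ᵥ (ψ₁ - ψ₂))‖ ≤ ‖ev (ψ₁ - ψ₂)‖ := by
    calc ∑ o, ‖ev (B o *ᵥ ψ₂)‖ * ‖ev (B o *ᵥ (ψ₁ - ψ₂))‖
        ≤ Real.sqrt (∑ o, ‖ev (B o *ᵥ ψ₂)‖ ^ 2) *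
          Real.sqrt (∑ o, ‖ev (B o *ᵥ (ψ₁ - ψ₂))‖ ^ 2) :=
          Real.sum_mul_le_sqrt_mul_sqrt _ _ _
    _ = ‖ev (ψ₁ - ψ₂)‖ := by
        rw [key2, key2, hevψ₂, Real.sqrt_one, one_mul, Real.sqrt_sq (norm_nonneg _)]
  have hTV2 : ∑ o, |p₁ o - p₂ o| ≤ 2 * ‖ev (ψ₁ - ψ₂)‖ := by
    calc ∑ o, |p₁ o - p₂ o|
        ≤ ∑ o, (‖ev (B o *ᵥ (ψ₁ - ψ₂))‖ * ‖ev (B o *ᵥ ψ₁)‖ +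
            ‖ev (B o *ᵥ ψ₂)‖ * ‖ev (B o *ᵥ (ψ₁ - ψ₂))‖) :=
          Finset.sum_le_sum fun o _ => hdiff o
    _ = (∑ o, ‖ev (B o *ᵥ (ψ₁ - ψ₂))‖ * ‖ev (B o *ᵥ ψ₁)‖) +
        ∑ o, ‖ev (B o *ᵥ ψ₂)‖ * ‖ev (B o *ᵥ (ψ₁ - ψ₂))‖ := Finset.sum_add_distrib
    _ ≤ ‖ev (ψ₁ - ψ₂)‖ + ‖ev (ψ₁ - ψ₂)‖ := add_le_add hCS1 hCS2
    _ = 2 * ‖ev (ψ₁ - ψ₂)‖ := by ring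
  -- trivial bound
  have hTV1 : ∑ o, |p₁ o - p₂ o| ≤ 2 := by
    have hsum₁ : ∑ o, p₁ o = 1 := by
      calc ∑ o, p₁ o = ∑ o, ‖ev (B o *ᵥ ψ₁)‖ ^ 2 := Finset.sum_congr rfl fun o _ => hbp₁ o
      _ = 1 := by rw [key2, hevψ₁]
    have hsum₂ : ∑ o, p₂ o = 1 := by
      calc ∑ o, p₂ o = ∑ o, ‖ev (B o *ᵥ ψ₂)‖ ^ 2 := Finset.sum_congr rfl fun o _ => hbp₂ o
      _ = 1 := by rw [key2, hevψ₂]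
    calc ∑ o, |p₁ o - p₂ o| ≤ ∑ o, (p₁ o + p₂ o) := by
          refine Finset.sum_le_sum fun o _ => ?_
          have h1 : 0 ≤ p₁ o := by rw [hbp₁ o]; positivity
          have h2 : 0 ≤ p₂ o := by rw [hbp₂ o]; positivity
          rw [abs_sub_le_iff]
          constructor <;> linarith
    _ = 2 := by rw [Finset.sum_add_distrib, hsum₁, hsum₂]; norm_num
  -- circuit difference bound
  have hVd : ‖V₁ - V₂‖ ≤ ‖H₁ - H₂‖ * ∑ i, |t i| := by
    rw [hV₁, hV₂, runCircuit, runCircuit, ← mul_sub]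
    calc ‖U (Fin.last D) *
        ((List.ofFn fun i : Fin D => ctrlEvolExt n H₁ (t i) A * U i.castSucc).reverse.prod -
         (List.ofFn fun i : Fin D => ctrlEvolExt n H₂ (t i) A * U i.castSucc).reverse.prod)‖
        = ‖(List.ofFn fun i : Fin D => ctrlEvolExt n H₁ (t i) A * U i.castSucc).reverse.prod -
           (List.ofFn fun i : Fin D => ctrlEvolExt n H₂ (t i) A * U i.castSucc).reverse.prod‖ :=
          CStarRing.norm_mem_unitary_mul _ (hU _)
    _ ≤ ∑ i : Fin D, ‖ctrlEvolExt n H₁ (t i) A * U i.castSucc -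
          ctrlEvolExt n H₂ (t i) A * U i.castSucc‖ := by
        apply tele_bound D
        · intro i
          exact le_of_eq (CStarRing.norm_of_mem_unitary
            (mul_mem (ctrlEvolExt_mem_unitary hH₁ _ A) (hU _)))
        · intro i
          exact le_of_eq (CStarRing.norm_of_mem_unitary
            (mul_mem (ctrlEvolExt_mem_unitary hH₂ _ A) (hU _)))
    _ ≤ ∑ i : Fin D, ‖H₁ - H₂‖ * |t i| := by
        refine Finset.sum_le_sum fun i _ => ?_
        rw [← sub_mul]
        calc ‖(ctrlEvolExt n H₁ (t i) A - ctrlEvolExt n H₂ (t i) A) * U i.castSucc‖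
            ≤ ‖ctrlEvolExt n H₁ (t i) A - ctrlEvolExt n H₂ (t i) A‖ * ‖U i.castSucc‖ :=
              norm_mul_le _ _
        _ = ‖ctrlEvolExt n H₁ (t i) A - ctrlEvolExt n H₂ (t i) A‖ := by
              rw [CStarRing.norm_of_mem_unitary (hU _), mul_one]
        _ ≤ ‖H₁ - H₂‖ * |t i| := ctrl_diff_norm hH₁ hH₂ (t i) A
    _ = ‖H₁ - H₂‖ * ∑ i, |t i| := by rw [Finset.mul_sum]
  -- state difference bound
  have hδ : ‖ev (ψ₁ - ψ₂)‖ ≤ ‖H₁ - H₂‖ * ∑ i, |t i| := by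
    have h1 : ψ₁ - ψ₂ = (V₁ - V₂) *ᵥ ψ₀ := (Matrix.sub_mulVec _ _ _).symm
    rw [h1]
    calc ‖ev ((V₁ - V₂) *ᵥ ψ₀)‖ ≤ ‖V₁ - V₂‖ * ‖ev ψ₀‖ := ev_mulVec_le _ _
    _ = ‖V₁ - V₂‖ := by rw [hψ₀norm, mul_one]
    _ ≤ ‖H₁ - H₂‖ * ∑ i, |t i| := hVd
  -- conclusion
  have hnorm_eq : ‖H₁ - H₂‖ = ‖Matrix.toEuclideanCLM (𝕜 := ℂ) (H₁ - H₂)‖ :=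
    Matrix.cstar_norm_def _
  have hnn : (0 : ℝ) ≤ ‖H₁ - H₂‖ * ∑ i, |t i| := by positivity
  rw [le_min_iff]
  constructor
  · calc (1 / 2) * ∑ o, |p₁ o - p₂ o| ≤ (1 / 2) * (2 * ‖ev (ψ₁ - ψ₂)‖) := by linarith
    _ = ‖ev (ψ₁ - ψ₂)‖ := by ring
    _ ≤ ‖H₁ - H₂‖ * ∑ i, |t i| := hδ
    _ ≤ 2 * ‖Matrix.toEuclideanCLM (𝕜 := ℂ) (H₁ - H₂)‖ * ∑ i, |t i| := by
        rw [← hnorm_eq]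
        nlinarith [hnn]
  · linarith

end MainProof
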